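/- Let $n \ge 2$, $K \ge 1$, $y \in \mathbb{R}^n$, $r > 0$, and $\Phi(x) = y + (x-y)(r/|x-y|)^{1+1/K}$ for $x \ne y$. Then for every $x \ne y$, the derivative $D\Phi(x)$ satisfies the distortion inequality $\max_{\xi \in \mathbb{S}^{n-1}} |D\Phi(x)\xi| \le K \min_{\xi \in \mathbb{S}^{n-1}} |D\Phi(x)\xi|$, and $\det D\Phi(x) = -\frac{1}{K}\left(\frac{r}{|x-y|}\right)^{n(1+1/K)} < 0$. -/

import Mathlib

open Metric Real

set_option maxHeartbeats 1600000 in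
/-- The radial stretching map `Φ(x) = y + (x-y)(r/|x-y|)^{1+1/K}` is pointwise
`K`-quasiregular away from the center: its derivative satisfies the distortion
inequality `max_{|ξ|=1} |DΦ(x)ξ| ≤ K min_{|η|=1} |DΦ(x)η|`, and its Jacobian
determinant equals `-(1/K)(r/|x-y|)^{n(1+1/K)} < 0`. -/
theorem radial_stretching_distortion_and_jacobian
    (n : ℕ) (hn : 2 ≤ n) (K : ℝ) (hK : 1 ≤ K)
    (y : EuclideanSpace ℝ (Fin n)) (r : ℝ) (hr : 0 < r)
    (Φ : EuclideanSpace ℝ (Fin n) → EuclideanSpace ℝ (Fin n))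
    (hΦ : ∀ x, x ≠ y → Φ x = y + ((r / ‖x - y‖) ^ (1 + 1/K)) • (x - y)) :
    ∀ x, x ≠ y →
      (∀ ξ η : EuclideanSpace ℝ (Fin n), ‖ξ‖ = 1 → ‖η‖ = 1 →
        ‖fderiv ℝ Φ x ξ‖ ≤ K * ‖fderiv ℝ Φ x η‖) ∧
      LinearMap.det (fderiv ℝ Φ x).toLinearMap
        = -(1 / K) * (r / ‖x - y‖) ^ ((n : ℝ) * (1 + 1/K)) ∧
      LinearMap.det (fderiv ℝ Φ x).toLinearMap < 0 := by
  intro x hx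
  haveI : NeZero n := ⟨by omega⟩
  have hK0 : (0:ℝ) < K := lt_of_lt_of_le one_pos hK
  set k : ℝ := 1/K with hk
  have hk0 : 0 < k := by positivity
  have hk1 : k ≤ 1 := by rw [hk]; rw [div_le_one hK0]; exact hK
  set a : ℝ := 1 + k with ha
  set u : EuclideanSpace ℝ (Fin n) := x - y with hu
  have hu0 : u ≠ 0 := sub_ne_zero.mpr hx
  set ρ : ℝ := ‖u‖ with hρ
  have hρ0 : 0 < ρ := norm_pos_iff.mpr hu0
  set s : ℝ := (r / ρ) ^ a with hs
  have hs0 : 0 < s := rpow_pos_of_pos (by positivity) a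
  -- the candidate derivative
  set D : EuclideanSpace ℝ (Fin n) →L[ℝ] EuclideanSpace ℝ (Fin n) :=
    s • ContinuousLinearMap.id ℝ (EuclideanSpace ℝ (Fin n))
      - (s * a / ρ ^ 2) • ((innerSL ℝ u).smulRight u) with hD
  have hDapp : ∀ ξ, D ξ = s • ξ - ((s * a / ρ ^ 2) * (inner ℝ u ξ : ℝ)) • u := by
    intro ξ
    simp [hD, ContinuousLinearMap.smul_apply, smul_smul]
  -- pointwise identity for the coefficient function
  have hcoef : ∀ z : EuclideanSpace ℝ (Fin n), z ≠ y →
      (r / ‖z - y‖) ^ a = r ^ a * ((‖z - y‖ ^ 2) ^ (-(a/2))) := by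
    intro z hz
    have hzy : (0:ℝ) < ‖z - y‖ := norm_pos_iff.mpr (sub_ne_zero.mpr hz)
    rw [div_rpow hr.le hzy.le, div_eq_mul_inv]
    congr 1
    rw [← rpow_natCast (‖z - y‖) 2, ← rpow_mul hzy.le, ← rpow_neg hzy.le]
    congr 1
    push_cast
    ring
  -- derivative of the coefficient function
  have hsub : HasFDerivAt (fun z : EuclideanSpace ℝ (Fin n) => z - y)
      (ContinuousLinearMap.id ℝ (EuclideanSpace ℝ (Fin n))) x :=
    (hasFDerivAt_id x).sub_const y
  have hnsq : HasFDerivAt (fun z : EuclideanSpace ℝ (Fin n) => ‖z - y‖ ^ 2)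
      ((2:ℝ) • (innerSL ℝ u)) x := by
    have h := hsub.norm_sq
    refine h.congr_fderiv ?_
    refine ContinuousLinearMap.ext fun ξ => ?_
    rw [hu]
    simp [two_smul]
  have hρ20 : (ρ:ℝ) ^ 2 ≠ 0 := by positivity
  have hρsq : ‖x - y‖ ^ 2 = ρ ^ 2 := by rw [hρ, hu]
  have hpow : HasFDerivAt (fun z : EuclideanSpace ℝ (Fin n) => (‖z - y‖ ^ 2) ^ (-(a/2)))
      (((-(a/2)) * (ρ ^ 2) ^ (-(a/2) - 1)) • ((2:ℝ) • (innerSL ℝ u))) x := by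
    have h := hnsq.rpow_const (p := -(a/2)) (Or.inl (by rw [hρsq]; exact hρ20))
    convert h using 2
  have hsmul := ((hpow.const_mul (r ^ a)).smul hsub).const_add y
  have hg : HasFDerivAt (fun z : EuclideanSpace ℝ (Fin n) =>
      y + (r ^ a * ((‖z - y‖ ^ 2) ^ (-(a/2)))) • (z - y)) D x := by
    refine hsmul.congr_fderiv ?_
    have hcancel : r ^ a * (ρ ^ 2) ^ (-(a/2)) = s := by
      have := (hcoef x hx).symm
      rwa [← hu, ← hρ, hρsq] at this
    have hstep : (ρ ^ 2) ^ (-(a/2) - 1) = (ρ ^ 2) ^ (-(a/2)) / ρ ^ 2 := by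
      rw [rpow_sub (by positivity), rpow_one]
    refine ContinuousLinearMap.ext fun ξ => ?_
    rw [hDapp ξ]
    simp only [ContinuousLinearMap.add_apply, ContinuousLinearMap.smul_apply,
      ContinuousLinearMap.smulRight_apply, ContinuousLinearMap.coe_id', id_eq,
      ContinuousLinearMap.coe_smul', Pi.smul_apply, smul_eq_mul]
    rw [← hu, ← hρ, hρsq]
    rw [hcancel]
    match_scalars
    all_goals simp only [innerSL_apply_apply]
    all_goals try rw [hstep, ← hcancel]
    all_goals field_simp
    all_goals ring
  -- transfer to Φ
  have hev : Φ =ᶠ[nhds x] (fun z : EuclideanSpace ℝ (Fin n) =>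
      y + (r ^ a * ((‖z - y‖ ^ 2) ^ (-(a/2)))) • (z - y)) := by
    have hopen : IsOpen {z : EuclideanSpace ℝ (Fin n) | z ≠ y} := isOpen_ne
    filter_upwards [hopen.mem_nhds hx] with z hz
    rw [hΦ z hz, hcoef z hz]
  have hΦD : HasFDerivAt Φ D x := hg.congr_of_eventuallyEq hev
  have hfd : fderiv ℝ Φ x = D := hΦD.fderiv
  rw [hfd]
  clear hsub hnsq hpow hsmul hg hev hΦD hfd hcoef hΦ hD
  clear_value D s ρ u a k
  -- norm bounds on D ξ for unit ξ
  have hbound : ∀ ξ : EuclideanSpace ℝ (Fin n), ‖ξ‖ = 1 →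
      s * k ≤ ‖D ξ‖ ∧ ‖D ξ‖ ≤ s := by
    intro ξ hξ
    have key : ∀ c : ℝ, ‖s • ξ - c • u‖ ^ 2
        = s^2 - 2*s*c*(inner ℝ u ξ : ℝ) + c^2 * ρ^2 := by
      intro c
      rw [norm_sub_sq_real, real_inner_smul_left, real_inner_smul_right,
        real_inner_comm ξ u]
      simp only [norm_smul, Real.norm_eq_abs, mul_pow, sq_abs, hξ, ← hρ]
      ring
    set t : ℝ := (inner ℝ u ξ : ℝ) with htdef
    clear_value t
    have hts : t ^ 2 ≤ ρ ^ 2 := by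
      have h1 := abs_real_inner_le_norm u ξ
      rw [hξ, mul_one, ← hρ, ← htdef] at h1
      nlinarith [abs_nonneg t, sq_abs t]
    have hDsq : ‖D ξ‖ ^ 2 = s ^ 2 - (2*a - a^2) * (s^2 / ρ^2) * t ^ 2 := by
      rw [hDapp, ← htdef, key]
      field_simp
      ring
    have hak : 2*a - a^2 = 1 - k^2 := by rw [ha]; ring
    have h1k : (0:ℝ) ≤ 1 - k^2 := by nlinarith
    have hsρ : (0:ℝ) ≤ s^2/ρ^2 := div_nonneg (sq_nonneg s) (sq_nonneg ρ)
    rw [hak] at hDsq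
    have hN : 0 ≤ ‖D ξ‖ := norm_nonneg _
    set N : ℝ := ‖D ξ‖ with hNdef
    clear_value N
    clear key htdef hDapp hρsq hρ20 hNdef hak hs ha hk hρ hu hu0 hx 
    have e2 : (1 - k^2) * (s^2/ρ^2) * ρ^2 = s^2 - s^2 * k^2 := by
      field_simp
    constructor
    · have e1 : (0:ℝ) ≤ (1 - k^2) * (s^2/ρ^2) * (ρ^2 - t^2) :=
        mul_nonneg (mul_nonneg h1k hsρ) (by linarith)
      have h2 : (s*k)^2 ≤ N ^ 2 := by nlinarith
      nlinarith [mul_pos hs0 hk0]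
    · have e1 : (0:ℝ) ≤ (1 - k^2) * (s^2/ρ^2) * t^2 :=
        mul_nonneg (mul_nonneg h1k hsρ) (sq_nonneg t)
      have h2 : N ^ 2 ≤ s ^ 2 := by linarith
      nlinarith
  -- an orthonormal basis starting with the radial direction
  obtain ⟨b, hb⟩ : ∃ b : OrthonormalBasis (Fin n) ℝ (EuclideanSpace ℝ (Fin n)),
      b 0 = ρ⁻¹ • u := by
    have hcard : Module.finrank ℝ (EuclideanSpace ℝ (Fin n)) = Fintype.card (Fin n) := by
      simp [finrank_euclideanSpace_fin]
    have horth : Orthonormal ℝ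
        (Set.restrict {0} (fun _ : Fin n => ρ⁻¹ • u)) := by
      constructor
      · intro i
        show ‖ρ⁻¹ • u‖ = 1
        rw [norm_smul, ← hρ, Real.norm_eq_abs, abs_of_pos (inv_pos.mpr hρ0), inv_mul_cancel₀ hρ0.ne']
      · intro i j hij
        exact absurd (Subtype.ext ((show (i:Fin n) = 0 from i.2).trans
          (show (j:Fin n) = 0 from j.2).symm)) hij
    obtain ⟨b, hb⟩ := horth.exists_orthonormalBasis_extension_of_card_eq hcard
    exact ⟨b, hb 0 rfl⟩
  have hub : u = ρ • b 0 := by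
    rw [hb, smul_smul, mul_inv_cancel₀ hρ0.ne', one_smul]
  have hinner0 : (inner ℝ u (b 0) : ℝ) = ρ := by
    rw [hub, real_inner_smul_left, real_inner_self_eq_norm_sq]
    have : ‖b 0‖ = 1 := b.orthonormal.1 0
    rw [this]
    ring
  have hinnerj : ∀ j : Fin n, j ≠ 0 → (inner ℝ u (b j) : ℝ) = 0 := by
    intro j hj
    rw [hub, real_inner_smul_left, b.orthonormal.2 (Ne.symm hj), mul_zero]
  -- D acts diagonally on this basis
  set d : Fin n → ℝ := fun j => if j = 0 then -(s*k) else s with hd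
  have hDb : ∀ j, D (b j) = d j • b j := by
    intro j
    rw [hDapp]
    by_cases hj : j = 0
    · subst hj
      rw [hinner0, hub]
      simp only [hd, if_pos rfl]
      match_scalars
      rw [ha]
      field_simp
      ring
    · rw [hinnerj j hj]
      simp [hd, hj]
  have hmat : LinearMap.toMatrix b.toBasis b.toBasis D.toLinearMap
      = Matrix.diagonal d := by
    ext i j
    rw [LinearMap.toMatrix_apply, OrthonormalBasis.coe_toBasis,
      ContinuousLinearMap.coe_coe, hDb j, map_smul]
    by_cases hij : i = j
    · subst hij
      simp [Matrix.diagonal]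
    · simp [Matrix.diagonal, hij, Module.Basis.repr_self,
        Finsupp.single_apply, Ne.symm hij]
  have hdet : LinearMap.det D.toLinearMap = -(s*k) * s ^ (n-1) := by
    rw [← LinearMap.det_toMatrix b.toBasis, hmat, Matrix.det_diagonal]
    rw [← Finset.mul_prod_erase Finset.univ d (Finset.mem_univ 0)]
    have h1 : d 0 = -(s*k) := by simp [hd]
    rw [h1]
    congr 1
    rw [Finset.prod_congr rfl (g := fun _ => s) (fun j hj => by
      simp only [Finset.mem_erase] at hj
      simp [hd, hj.1])]
    rw [Finset.prod_const, Finset.card_erase_of_mem (Finset.mem_univ 0),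
      Finset.card_univ, Fintype.card_fin]
  have hval : -(s*k) * s ^ (n-1) = -(1 / K) * (r / ρ) ^ ((n : ℝ) * a) := by
    have h1 : (r / ρ) ^ ((n : ℝ) * a) = s ^ n := by
      rw [mul_comm, rpow_mul (by positivity), ← hs, rpow_natCast]
    have h2 : s ^ n = s * s ^ (n-1) := by
      conv_lhs => rw [show n = 1 + (n-1) by omega]
      rw [pow_add, pow_one]
    rw [h1, h2, hk]
    ring
  refine ⟨?_, ?_, ?_⟩
  · intro ξ η hξ hη
    obtain ⟨hξl, hξu⟩ := hbound ξ hξ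
    obtain ⟨hηl, hηu⟩ := hbound η hη
    calc ‖D ξ‖ ≤ s := hξu
      _ = K * (s * k) := by rw [hk]; field_simp
      _ ≤ K * ‖D η‖ := by
          apply mul_le_mul_of_nonneg_left hηl hK0.le
  · rw [hdet, hval, hk]
  · rw [hdet]
    have : (0:ℝ) < s * k * s ^ (n-1) := by positivity
    nlinarith
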